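/- arXiv:math/0501518 — 10 statements merged into one kernel-verified Lean document; each statement's English description precedes it below -/
import Mathlib

section
/- Let A be a commutative ring with 1 and let Φ_t = 1 + tφ₁ + ⋯ + t^m φ_m be a formal automorphism of order m on A (additive maps φ_i with φ₀ = id satisfying φ_n(ab) = Σ_{i=0}^n φ_i(a)φ_{n-i}(b) for all 0 ≤ n ≤ m). Define the Hochschild 2-cochain Ob(Φ_t) : A ⊗ A → A by Ob(Φ_t)(a ⊗ b) = − Σ_{i=1}^m φ_i(a) φ_{m+1−i}(b). Then Ob(Φ_t) is a Hochschild 2-cocycle: for all a,b,c ∈ A, a·Ob(Φ_t)(b⊗c) − Ob(Φ_t)(ab⊗c) + Ob(Φ_t)(a⊗bc) − Ob(Φ_t)(a⊗b)·c = 0. -/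
/-- The obstruction class `Ob(Φ_t)(a⊗b) = -Σ_{i=1}^m φ_i(a)φ_{m+1-i}(b)` of a formal
automorphism of order `m` is a Hochschild 2-cocycle. -/
theorem stmt_3 {A : Type*} [CommRing A] (m : ℕ) (hm : 1 ≤ m) (φ : ℕ → A →+ A)
    (h0 : φ 0 = AddMonoidHom.id A)
    (hmul : ∀ n, n ≤ m → ∀ a b : A,
      φ n (a * b) = ∑ i ∈ Finset.range (n + 1), φ i a * φ (n - i) b)
    (Ob : A →+ A →+ A)
    (hOb : ∀ a b : A, Ob a b = -∑ i ∈ Finset.Icc 1 m, φ i a * φ (m + 1 - i) b) :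
    ∀ a b c : A, a * Ob b c - Ob (a * b) c + Ob a (b * c) - Ob a b * c = 0 := by
  intro a b c
  -- the common double sum
  set T : A := ∑ i ∈ Finset.Icc 1 m, ∑ j ∈ Finset.range (m + 1 - i),
      φ i a * φ j b * φ (m + 1 - i - j) c with hT
  have hins : ∀ i : ℕ, Finset.range (i + 1) = insert 0 (Finset.Icc 1 i) := by
    intro i; ext x; simp [Nat.lt_succ_iff]; omega
  -- h1 : B(ab, c) = a * B(b,c) + T
  have h1 : ∑ i ∈ Finset.Icc 1 m, φ i (a * b) * φ (m + 1 - i) c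
      = a * (∑ i ∈ Finset.Icc 1 m, φ i b * φ (m + 1 - i) c) + T := by
    have step : ∀ i ∈ Finset.Icc 1 m, φ i (a * b) * φ (m + 1 - i) c
        = a * (φ i b * φ (m + 1 - i) c)
          + ∑ j ∈ Finset.Icc 1 i, φ j a * φ (i - j) b * φ (m + 1 - i) c := by
      intro i hi
      rw [Finset.mem_Icc] at hi
      rw [hmul i hi.2, hins i, Finset.sum_insert (by simp), add_mul, Finset.sum_mul]
      simp [h0, mul_assoc]
    rw [Finset.sum_congr rfl step, Finset.sum_add_distrib, ← Finset.mul_sum]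
    congr 1
    -- reindex double sum
    rw [hT, Finset.sum_sigma', Finset.sum_sigma']
    apply Finset.sum_nbij' (fun p => (⟨p.2, p.1 - p.2⟩ : Σ _ : ℕ, ℕ))
      (fun p => (⟨p.1 + p.2, p.1⟩ : Σ _ : ℕ, ℕ))
    · intro p hp
      simp only [Finset.mem_sigma, Finset.mem_Icc, Finset.mem_range] at hp ⊢
      omega
    · intro p hp
      simp only [Finset.mem_sigma, Finset.mem_Icc, Finset.mem_range] at hp ⊢
      omega
    · intro p hp
      simp only [Finset.mem_sigma, Finset.mem_Icc, Finset.mem_range] at hp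
      ext <;> simp <;> omega
    · intro p hp
      simp only [Finset.mem_sigma, Finset.mem_Icc, Finset.mem_range] at hp
      ext <;> simp <;> omega
    · intro p hp
      simp only [Finset.mem_sigma, Finset.mem_Icc, Finset.mem_range] at hp
      have : m + 1 - p.1 = m + 1 - p.2 - (p.1 - p.2) := by omega
      simp [this]
  -- h2 : B(a, bc) = T + B(a,b) * c
  have h2 : ∑ i ∈ Finset.Icc 1 m, φ i a * φ (m + 1 - i) (b * c)
      = T + (∑ i ∈ Finset.Icc 1 m, φ i a * φ (m + 1 - i) b) * c := by
    have step : ∀ i ∈ Finset.Icc 1 m, φ i a * φ (m + 1 - i) (b * c)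
        = (∑ j ∈ Finset.range (m + 1 - i), φ i a * φ j b * φ (m + 1 - i - j) c)
          + φ i a * φ (m + 1 - i) b * c := by
      intro i hi
      rw [Finset.mem_Icc] at hi
      have hle : m + 1 - i ≤ m := by omega
      rw [hmul (m + 1 - i) hle, Finset.sum_range_succ, mul_add, Finset.mul_sum]
      have : m + 1 - i - (m + 1 - i) = 0 := by omega
      simp [this, h0, mul_assoc]
    rw [Finset.sum_congr rfl step, Finset.sum_add_distrib, ← Finset.sum_mul, hT]
  simp only [hOb, map_mul]
  rw [h1, h2]
  ring
end

section
/- Let A be a commutative ring with 1 such that every Hochschild 2-cocycle on A (with coefficients in A over ℤ) is a 2-coboundary, i.e. HH²(A) = 0. Let m ≥ 1 and let φ be a derivation on A. Then there exist additive maps φ_{m+1}, φ_{m+2}, … such that Φ_t = 1 + t^m φ + t^{m+1}φ_{m+1} + t^{m+2}φ_{m+2} + ⋯ is a formal automorphism on A, i.e. its coefficients ψ_n (with ψ₀ = id, ψ_m = φ, ψ_n = 0 for 0 < n < m, ψ_n = φ_n for n > m) satisfy ψ_n(ab) = Σ_{i=0}^n ψ_i(a)ψ_{n−i}(b) for all n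 ≥ 0 and a,b ∈ A. -/
open Finset PowerSeries
open scoped Classical

section Aux

variable {A : Type*} [CommRing A]

/-- Bundled bilinear map `(a,b) ↦ u a * v b`. -/
private def bilinAux (u v : A →+ A) : A →+ A →+ A :=
  AddMonoidHom.mk' (fun a => AddMonoidHom.mk' (fun b => u a * v b)
      (by intro b c; simp [mul_add]))
    (by intro a b; ext c; simp [add_mul])

@[simp] private lemma bilinAux_apply (u v : A →+ A) (a b : A) :
    bilinAux u v a b = u a * v b := rfl

private lemma sum_split' {B : Type*} [AddCommMonoid B] (t : ℕ → B) (n : ℕ) (hn : 1 ≤ n) :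
    ∑ i ∈ Finset.range (n + 1), t i = t 0 + (∑ i ∈ Finset.Ico 1 n, t i) + t n := by
  rw [Finset.range_eq_Ico, Finset.sum_eq_sum_Ico_succ_bot (by omega) t,
    Finset.sum_Ico_succ_top (by omega)]
  abel

private lemma coeff_mul_trunc (F : ℕ → A →+ A) (n : ℕ) (a b : A) (k : ℕ) :
    (PowerSeries.coeff k)
      ((PowerSeries.mk fun i => if i < n then F i a else 0) *
       (PowerSeries.mk fun i => if i < n then F i b else 0)) =
    ∑ i ∈ Finset.range (k + 1),
      (if i < n then F i a else 0) * (if k - i < n then F (k - i) b else 0) := by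
  rw [PowerSeries.coeff_mul, Finset.Nat.sum_antidiagonal_eq_sum_range_succ_mk]
  simp [PowerSeries.coeff_mk]

private lemma hD_left (n : ℕ) (U D : PowerSeries A)
    (hD : ∀ k < n, PowerSeries.coeff k D = 0) :
    PowerSeries.coeff n (U * D) = PowerSeries.coeff 0 U * PowerSeries.coeff n D := by
  rw [PowerSeries.coeff_mul, Finset.Nat.sum_antidiagonal_eq_sum_range_succ_mk]
  rw [Finset.sum_eq_single_of_mem 0 (by simp)]
  · simp
  · intro i hi hne
    rw [hD (n - i) (by simp at hi; omega), mul_zero]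

private lemma hD_right (n : ℕ) (U D : PowerSeries A)
    (hD : ∀ k < n, PowerSeries.coeff k D = 0) :
    PowerSeries.coeff n (D * U) = PowerSeries.coeff n D * PowerSeries.coeff 0 U := by
  rw [mul_comm, hD_left n U D hD, mul_comm]

private lemma cocycleAux (F : ℕ → A →+ A) (n : ℕ) (hn1 : 1 ≤ n)
    (h0 : F 0 = AddMonoidHom.id A)
    (IH : ∀ k < n, ∀ a b : A, F k (a * b) = ∑ i ∈ Finset.range (k + 1), F i a * F (k - i) b)
    (a b c : A) :
    a * (∑ i ∈ Finset.Ico 1 n, F i b * F (n - i) c)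
      - (∑ i ∈ Finset.Ico 1 n, F i (a * b) * F (n - i) c)
      + (∑ i ∈ Finset.Ico 1 n, F i a * F (n - i) (b * c))
      - (∑ i ∈ Finset.Ico 1 n, F i a * F (n - i) b) * c = 0 := by
  set U : A → PowerSeries A := fun x => PowerSeries.mk fun i => if i < n then F i x else 0
    with hUdef
  have hU0 : ∀ x, PowerSeries.coeff 0 (U x) = x := by
    intro x; simp [hUdef, PowerSeries.coeff_mk, if_pos (by omega : 0 < n), h0]
  have hf : ∀ x y : A,
      PowerSeries.coeff n (U x * U y) = ∑ i ∈ Finset.Ico 1 n, F i x * F (n - i) y := by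
    intro x y
    rw [coeff_mul_trunc F n x y n, sum_split' _ n hn1]
    rw [if_neg (by omega : ¬ n - 0 < n), if_neg (lt_irrefl n)]
    rw [mul_zero, zero_mul, add_zero, zero_add]
    refine Finset.sum_congr rfl fun i hi => ?_
    have hi' := Finset.mem_Ico.mp hi
    rw [if_pos hi'.2, if_pos (by omega)]
  have hmulk : ∀ (x y : A) (k : ℕ), k < n →
      PowerSeries.coeff k (U (x * y)) = PowerSeries.coeff k (U x * U y) := by
    intro x y k hk
    rw [coeff_mul_trunc F n x y k]
    have : PowerSeries.coeff k (U (x * y)) = F k (x * y) := by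
      simp [hUdef, PowerSeries.coeff_mk, if_pos hk]
    rw [this, IH k hk x y]
    refine Finset.sum_congr rfl fun i hi => ?_
    have hi' := Finset.mem_range.mp hi
    rw [if_pos (by omega), if_pos (by omega)]
  have hUn : ∀ x, PowerSeries.coeff n (U x) = 0 := by
    intro x; simp [hUdef, PowerSeries.coeff_mk]
  have key : ∀ x y z : A,
      PowerSeries.coeff n (U (x * y) * U z)
        = PowerSeries.coeff n (U x * U y * U z)
          - (∑ i ∈ Finset.Ico 1 n, F i x * F (n - i) y) * z := by
    intro x y z
    have hrw : U (x * y) * U z = U x * U y * U z + (U (x * y) - U x * U y) * U z := by ring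
    rw [hrw, map_add, hD_right n (U z) (U (x * y) - U x * U y)
      (fun k hk => by simp [map_sub, hmulk x y k hk])]
    rw [map_sub (PowerSeries.coeff n), hUn, hU0, hf]
    ring
  have key2 : ∀ x y z : A,
      PowerSeries.coeff n (U x * U (y * z))
        = PowerSeries.coeff n (U x * U y * U z)
          - x * (∑ i ∈ Finset.Ico 1 n, F i y * F (n - i) z) := by
    intro x y z
    have hrw : U x * U (y * z) = U x * U y * U z + U x * (U (y * z) - U y * U z) := by ring
    rw [hrw, map_add, hD_left n (U x) (U (y * z) - U y * U z)
      (fun k hk => by simp [map_sub, hmulk y z k hk])]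
    rw [map_sub (PowerSeries.coeff n), hUn, hU0, hf]
    ring
  have e1 : (∑ i ∈ Finset.Ico 1 n, F i (a * b) * F (n - i) c)
      = PowerSeries.coeff n (U a * U b * U c)
        - (∑ i ∈ Finset.Ico 1 n, F i a * F (n - i) b) * c := by
    rw [← hf (a * b) c, key a b c]
  have e2 : (∑ i ∈ Finset.Ico 1 n, F i a * F (n - i) (b * c))
      = PowerSeries.coeff n (U a * U b * U c)
        - a * (∑ i ∈ Finset.Ico 1 n, F i b * F (n - i) c) := by
    rw [← hf a (b * c), key2 a b c]
  rw [e1, e2]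
  ring

/-- The recursively constructed coefficient maps of the formal automorphism. -/
private noncomputable def FF (m : ℕ) (φ : A →+ A) : ℕ → A →+ A := fun n =>
  Nat.strongRec (motive := fun _ => A →+ A) (t := n) (fun n rec =>
    if n = 0 then AddMonoidHom.id A
    else if n < m then 0
    else if n = m then φ
    else
      if h : ∃ g : A →+ A, ∀ a b : A,
          (∑ i ∈ (Finset.Ico 1 n).attach,
            rec i.1 (Finset.mem_Ico.mp i.2).2 a *
            rec (n - i.1) (by have := Finset.mem_Ico.mp i.2; omega) b)
          = a * g b - g (a * b) + g a * b
      then -h.choose else 0)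

private lemma FF_gt (m : ℕ) (φ : A →+ A) (n : ℕ) (h : m < n) (hm : 1 ≤ m) :
    FF m φ n =
      if h : ∃ g : A →+ A, ∀ a b : A,
          (∑ i ∈ (Finset.Ico 1 n).attach, FF m φ i.1 a * FF m φ (n - i.1) b)
          = a * g b - g (a * b) + g a * b
      then -h.choose else 0 := by
  rw [FF, Nat.strongRecOn'_beta]
  rw [if_neg (by omega), if_neg (by omega), if_neg (by omega)]
  rfl

private lemma FF_zero (m : ℕ) (φ : A →+ A) : FF m φ 0 = AddMonoidHom.id A := by
  rw [FF, Nat.strongRecOn'_beta]; simp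

private lemma FF_lt (m : ℕ) (φ : A →+ A) (i : ℕ) (h0 : 0 < i) (h : i < m) :
    FF m φ i = 0 := by
  rw [FF, Nat.strongRecOn'_beta]
  rw [if_neg (by omega), if_pos h]

private lemma FF_m (m : ℕ) (φ : A →+ A) (hm : 1 ≤ m) : FF m φ m = φ := by
  rw [FF, Nat.strongRecOn'_beta]
  rw [if_neg (by omega), if_neg (by omega), if_pos rfl]

end Aux

/-- If every Hochschild 2-cocycle on `A` is a 2-coboundary (`HH²(A) = 0`), then for any
derivation `φ` and any `m ≥ 1`, the order-`m` formal automorphism `1 + tᵐ φ` extends to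
a (full) formal automorphism `1 + tᵐ φ + t^{m+1} φ_{m+1} + ⋯`. -/
theorem stmt_5 {A : Type*} [CommRing A]
    (hHH2 : ∀ f : A →+ A →+ A,
      (∀ a b c : A, a * f b c - f (a * b) c + f a (b * c) - f a b * c = 0) →
      ∃ g : A →+ A, ∀ a b : A, f a b = a * g b - g (a * b) + g a * b)
    (m : ℕ) (hm : 1 ≤ m) (φ : A →+ A)
    (hder : ∀ a b : A, φ (a * b) = a * φ b + φ a * b) :
    ∃ ψ : ℕ → A →+ A, ψ 0 = AddMonoidHom.id A ∧ ψ m = φ ∧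
      (∀ i, 0 < i → i < m → ψ i = 0) ∧
      (∀ (n : ℕ) (a b : A),
        ψ n (a * b) = ∑ i ∈ Finset.range (n + 1), ψ i a * ψ (n - i) b) := by
  refine ⟨FF m φ, FF_zero m φ, FF_m m φ hm, fun i h1 h2 => FF_lt m φ i h1 h2, ?_⟩
  intro n
  induction n using Nat.strong_induction_on with
  | _ n IH =>
  intro a b
  rcases Nat.lt_trichotomy n m with h | heq | h
  · -- n < m
    rcases Nat.eq_zero_or_pos n with rfl | hn
    · simp [FF_zero]
    · rw [FF_lt m φ n hn h]
      rw [Finset.sum_eq_zero]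
      · simp
      · intro i hi
        rcases Nat.eq_zero_or_pos i with rfl | hi0
        · simp [FF_lt m φ n hn h]
        · rw [FF_lt m φ i hi0 (by have := Finset.mem_range.mp hi; omega)]
          simp
  · -- n = m
    subst heq
    rw [FF_m n φ hm, sum_split' _ n hm]
    rw [Finset.sum_eq_zero (fun i hi => by
      have hi' := Finset.mem_Ico.mp hi
      rw [FF_lt n φ i (by omega) hi'.2]; simp)]
    simp [FF_zero, FF_m n φ hm, hder a b]
  · -- m < n
    have hn1 : 1 ≤ n := by omega
    have hE : ∃ g : A →+ A, ∀ a b : A,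
        (∑ i ∈ (Finset.Ico 1 n).attach, FF m φ i.1 a * FF m φ (n - i.1) b)
        = a * g b - g (a * b) + g a * b := by
      obtain ⟨g, hg⟩ := hHH2
        (∑ i ∈ Finset.Ico 1 n, bilinAux (FF m φ i) (FF m φ (n - i)))
        (by
          intro a b c
          have hev : ∀ x y : A,
              (∑ i ∈ Finset.Ico 1 n, bilinAux (FF m φ i) (FF m φ (n - i))) x y
                = ∑ i ∈ Finset.Ico 1 n, FF m φ i x * FF m φ (n - i) y := by
            intro x y
            rw [AddMonoidHom.finset_sum_apply, AddMonoidHom.finset_sum_apply]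
            exact Finset.sum_congr rfl fun i _ => rfl
          rw [hev, hev, hev, hev]
          exact cocycleAux (FF m φ) n hn1 (FF_zero m φ) (fun k hk => IH k hk) a b c)
      refine ⟨g, fun x y => ?_⟩
      rw [Finset.sum_attach (Finset.Ico 1 n) (fun i => FF m φ i x * FF m φ (n - i) y)]
      have := hg x y
      rw [AddMonoidHom.finset_sum_apply, AddMonoidHom.finset_sum_apply] at this
      exact this
    have hspec : ∀ x y : A,
        (∑ i ∈ Finset.Ico 1 n, FF m φ i x * FF m φ (n - i) y)
        = x * hE.choose y - hE.choose (x * y) + hE.choose x * y := by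
      intro x y
      rw [← Finset.sum_attach (Finset.Ico 1 n) (fun i => FF m φ i x * FF m φ (n - i) y)]
      exact hE.choose_spec x y
    rw [sum_split' _ n hn1, Nat.sub_zero, Nat.sub_self, hspec a b]
    rw [FF_gt m φ n h hm, dif_pos hE, FF_zero]
    simp only [AddMonoidHom.neg_apply, AddMonoidHom.id_apply]
    ring
end

section
/- Let A be a commutative ring and let E be a commutative monoid (written additively) such that for each α ∈ E the set of pairs (β,γ) with β + γ = α is finite. Given s : E → End(A), define for f : E → End(A) the map (d¹₁ f)_α(a⊗b) = Σ_{β+γ=α} s_β(a)·f_γ(b) − f_α(ab) + Σ_{β+γ=α} f_β(a)·s_γ(b), and for g : E → Hom(A⊗A, A) define (d²₁ g)_α(a⊗b⊗c) = Σ_{β+γ=α} s_β(a)·g_γ(b⊗c) − g_α(ab⊗c) + g_α(a⊗bc) − Σ_{β+γ=α} g_β(a⊗b)·s_γ(c). Assume s satisfies the Cartan formula s_α(ab) = Σ_{β+γ=α} s_β(a) s_γ(b) for all α ∈ E and a,b ∈ A. Then d²₁ ∘ d¹₁ = 0. -/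
/-- In the Cartan part of the deformation complex, `d²₁ ∘ d¹₁ = 0`, given the Cartan
formula for `s` and finiteness of decompositions in the monoid `E`. -/
theorem stmt_8 {A : Type*} [CommRing A] {E : Type*} [AddCommMonoid E]
    (D : E → Finset (E × E)) (hD : ∀ (α : E) (p : E × E), p ∈ D α ↔ p.1 + p.2 = α)
    (s : E → A →+ A)
    (hcartan : ∀ (α : E) (a b : A), s α (a * b) = ∑ p ∈ D α, s p.1 a * s p.2 b)
    (f : E → A →+ A) (g : E → A →+ A →+ A)
    (hg : ∀ (α : E) (a b : A),
      g α a b = (∑ p ∈ D α, s p.1 a * f p.2 b) - f α (a * b)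
        + ∑ p ∈ D α, f p.1 a * s p.2 b) :
    ∀ (α : E) (a b c : A),
      (∑ p ∈ D α, s p.1 a * g p.2 b c) - g α (a * b) c + g α a (b * c)
        - ∑ p ∈ D α, g p.1 a b * s p.2 c = 0 := by
  have key : ∀ (α : E) (F : E → E → E → A),
      (∑ p ∈ D α, ∑ q ∈ D p.2, F p.1 q.1 q.2)
        = ∑ p ∈ D α, ∑ q ∈ D p.1, F q.1 q.2 p.2 := by
    intro α F
    rw [Finset.sum_sigma', Finset.sum_sigma']
    refine Finset.sum_nbij'
      (i := fun x => ⟨(x.1.1 + x.2.1, x.2.2), (x.1.1, x.2.1)⟩)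
      (j := fun x => ⟨(x.2.1, x.2.2 + x.1.2), (x.2.2, x.1.2)⟩)
      ?_ ?_ ?_ ?_ ?_
    · rintro ⟨⟨β, γ⟩, ⟨μ, ν⟩⟩ h
      simp only [Finset.mem_sigma, hD] at h ⊢
      obtain ⟨h1, h2⟩ := h
      exact ⟨by rw [add_assoc, h2, h1], trivial⟩
    · rintro ⟨⟨x, ν⟩, ⟨β, μ⟩⟩ h
      simp only [Finset.mem_sigma, hD] at h ⊢
      obtain ⟨h1, h2⟩ := h
      exact ⟨by rw [← add_assoc, h2, h1], trivial⟩
    · rintro ⟨⟨β, γ⟩, ⟨μ, ν⟩⟩ h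
      simp only [Finset.mem_sigma, hD] at h
      simp [h.2]
    · rintro ⟨⟨x, ν⟩, ⟨β, μ⟩⟩ h
      simp only [Finset.mem_sigma, hD] at h
      simp [h.2]
    · rintro ⟨⟨β, γ⟩, ⟨μ, ν⟩⟩ _
      rfl
  intro α a b c
  simp only [hg, hcartan, mul_sub, sub_mul, mul_add, add_mul, Finset.sum_add_distrib,
    Finset.sum_sub_distrib, Finset.mul_sum, Finset.sum_mul, mul_assoc]
  rw [key α (fun β μ ν => s β a * (s μ b * f ν c)),
    key α (fun β μ ν => s β a * (f μ b * s ν c)),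
    key α (fun β μ ν => f β a * (s μ b * s ν c))]
  abel
end

section
/- Let A be a commutative ring, E a commutative monoid with finite decompositions, s : E → End(A) satisfying the Cartan formula, and let s¹, …, s^m : E → End(A) (with s⁰ = s) satisfy the Cartan formula up to order m: s^n_α(ab) = Σ_{i=0}^n Σ_{β+γ=α} s^i_β(a) s^{n−i}_γ(b) for all 0 ≤ n ≤ m. Define Ob₁ : E → Hom(A⊗A,A) by (Ob₁)_α(a⊗b) = − Σ_{i=1}^m Σ_{β+γ=α} s^i_β(a) s^{m+1−i}_γ(b). Then Ob₁ is a 2-cocycle for d²₁: for all α ∈ E and a,b,c ∈ A, Σ_{β+γ=α} s_β(a)(Ob₁)_γ(b⊗c) − (Ob₁)_α(ab⊗c) + (Ob₁)_α(a⊗bc) − Σ_{β+γ=α} (Ob₁)_β(a⊗b) s_γ(c) = 0. -/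
open Finset

private lemma key_nat {M : Type*} [AddCommMonoid M] (m : ℕ) (G : ℕ → ℕ → M) :
    ((∑ i ∈ Icc 1 m, ∑ j ∈ range (i + 1), G j (i - j)) + ∑ i ∈ Icc 1 m, G i (m + 1 - i))
      = (∑ i ∈ Icc 1 m, G 0 i) + ∑ i ∈ Icc 1 m, ∑ j ∈ range (m + 2 - i), G i j := by
  have e1 : (∑ i ∈ Icc 1 m, ∑ j ∈ range (i + 1), G j (i - j))
      = ∑ x ∈ range (m + 2) ×ˢ range (m + 2),
          if 1 ≤ x.1 + x.2 ∧ x.1 + x.2 ≤ m then G x.1 x.2 else 0 := by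
    rw [Finset.sum_sigma', ← Finset.sum_filter]
    refine Finset.sum_nbij' (fun x => (x.2, x.1 - x.2)) (fun x => ⟨x.1 + x.2, x.1⟩) ?_ ?_ ?_ ?_ ?_
    · rintro ⟨i, j⟩ hx
      simp only [Finset.mem_sigma, mem_Icc, mem_range] at hx
      simp only [mem_filter, mem_product, mem_range]
      omega
    · rintro ⟨p, q⟩ hx
      simp only [mem_filter, mem_product, mem_range] at hx
      simp only [Finset.mem_sigma, mem_Icc, mem_range]
      omega
    · rintro ⟨i, j⟩ hx
      simp only [Finset.mem_sigma, mem_Icc, mem_range] at hx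
      have : j + (i - j) = i := by omega
      simp [this]
    · rintro ⟨p, q⟩ hx
      simp only [mem_filter, mem_product, mem_range] at hx
      have : p + q - p = q := by omega
      simp [this]
    · intro x hx; rfl
  have e2 : (∑ i ∈ Icc 1 m, G i (m + 1 - i))
      = ∑ x ∈ range (m + 2) ×ˢ range (m + 2),
          if x.1 + x.2 = m + 1 ∧ 1 ≤ x.1 ∧ x.1 ≤ m then G x.1 x.2 else 0 := by
    rw [← Finset.sum_filter]
    refine Finset.sum_nbij' (fun i => (i, m + 1 - i)) (fun x => x.1) ?_ ?_ ?_ ?_ ?_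
    · intro i hx
      simp only [mem_Icc] at hx
      simp only [mem_filter, mem_product, mem_range]
      omega
    · rintro ⟨p, q⟩ hx
      simp only [mem_filter, mem_product, mem_range] at hx
      simp only [mem_Icc]
      omega
    · intro i hx; rfl
    · rintro ⟨p, q⟩ hx
      simp only [mem_filter, mem_product, mem_range] at hx
      have : m + 1 - p = q := by omega
      simp [this]
    · intro i hx; rfl
  have e3 : (∑ i ∈ Icc 1 m, G 0 i)
      = ∑ x ∈ range (m + 2) ×ˢ range (m + 2),
          if x.1 = 0 ∧ 1 ≤ x.2 ∧ x.2 ≤ m then G x.1 x.2 else 0 := by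
    rw [← Finset.sum_filter]
    refine Finset.sum_nbij' (fun i => (0, i)) (fun x => x.2) ?_ ?_ ?_ ?_ ?_
    · intro i hx
      simp only [mem_Icc] at hx
      simp only [mem_filter, mem_product, mem_range]
      exact ⟨⟨by omega, by omega⟩, trivial, hx.1, hx.2⟩
    · rintro ⟨p, q⟩ hx
      simp only [mem_filter, mem_product, mem_range] at hx
      simp only [mem_Icc]
      omega
    · intro i hx; rfl
    · rintro ⟨p, q⟩ hx
      simp only [mem_filter, mem_product, mem_range] at hx
      have : p = 0 := hx.2.1
      simp [this]
    · intro i hx; rfl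
  have e4 : (∑ i ∈ Icc 1 m, ∑ j ∈ range (m + 2 - i), G i j)
      = ∑ x ∈ range (m + 2) ×ˢ range (m + 2),
          if 1 ≤ x.1 ∧ x.1 ≤ m ∧ x.1 + x.2 ≤ m + 1 then G x.1 x.2 else 0 := by
    rw [Finset.sum_sigma', ← Finset.sum_filter]
    refine Finset.sum_nbij' (fun x => (x.1, x.2)) (fun x => ⟨x.1, x.2⟩) ?_ ?_ ?_ ?_ ?_
    · rintro ⟨i, j⟩ hx
      simp only [Finset.mem_sigma, mem_Icc, mem_range] at hx
      simp only [mem_filter, mem_product, mem_range]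
      omega
    · rintro ⟨p, q⟩ hx
      simp only [mem_filter, mem_product, mem_range] at hx
      simp only [Finset.mem_sigma, mem_Icc, mem_range]
      omega
    · intro x hx; rfl
    · intro x hx; rfl
    · intro x hx; rfl
  rw [e1, e2, e3, e4, ← Finset.sum_add_distrib, ← Finset.sum_add_distrib]
  refine Finset.sum_congr rfl fun x hx => ?_
  simp only [mem_product, mem_range] at hx
  split_ifs <;> first | (exfalso; omega) | abel

private lemma assoc_sum {M : Type*} [AddCommMonoid M] {E : Type*} [AddCommMonoid E]
    (D : E → Finset (E × E)) (hD : ∀ (α : E) (p : E × E), p ∈ D α ↔ p.1 + p.2 = α)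
    (α : E) (F : E → E → E → M) :
    (∑ p ∈ D α, ∑ q ∈ D p.1, F q.1 q.2 p.2) = ∑ p ∈ D α, ∑ q ∈ D p.2, F p.1 q.1 q.2 := by
  rw [Finset.sum_sigma', Finset.sum_sigma']
  refine Finset.sum_nbij' (fun x => ⟨(x.2.1, x.2.2 + x.1.2), (x.2.2, x.1.2)⟩)
    (fun x => ⟨(x.1.1 + x.2.1, x.2.2), (x.1.1, x.2.1)⟩) ?_ ?_ ?_ ?_ ?_
  · rintro ⟨⟨p1, p2⟩, ⟨q1, q2⟩⟩ hx
    simp only [Finset.mem_sigma, hD] at hx ⊢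
    obtain ⟨h1, h2⟩ := hx
    rw [← add_assoc, h2, h1]
    exact ⟨rfl, trivial⟩
  · rintro ⟨⟨p1, p2⟩, ⟨q1, q2⟩⟩ hx
    simp only [Finset.mem_sigma, hD] at hx ⊢
    obtain ⟨h1, h2⟩ := hx
    rw [add_assoc, h2, h1]
    exact ⟨rfl, trivial⟩
  · rintro ⟨⟨p1, p2⟩, ⟨q1, q2⟩⟩ hx
    simp only [Finset.mem_sigma, hD] at hx
    obtain ⟨h1, h2⟩ := hx
    subst h2
    rfl
  · rintro ⟨⟨p1, p2⟩, ⟨q1, q2⟩⟩ hx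
    simp only [Finset.mem_sigma, hD] at hx
    obtain ⟨h1, h2⟩ := hx
    subst h2
    rfl
  · intro x hx; rfl

/-- The Cartan part `Ob₁` of the obstruction class of an order-`m` formal deformation
is a `d²₁`-cocycle. -/
theorem stmt_11 {A : Type*} [CommRing A] {E : Type*} [AddCommMonoid E]
    (D : E → Finset (E × E)) (hD : ∀ (α : E) (p : E × E), p ∈ D α ↔ p.1 + p.2 = α)
    (m : ℕ) (hm : 1 ≤ m) (s : ℕ → E → A →+ A)
    (hcartan : ∀ n, n ≤ m → ∀ (α : E) (a b : A),
      s n α (a * b) =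
        ∑ i ∈ Finset.range (n + 1), ∑ p ∈ D α, s i p.1 a * s (n - i) p.2 b)
    (Ob : E → A →+ A →+ A)
    (hOb : ∀ (α : E) (a b : A),
      Ob α a b = -∑ i ∈ Finset.Icc 1 m, ∑ p ∈ D α, s i p.1 a * s (m + 1 - i) p.2 b) :
    ∀ (α : E) (a b c : A),
      (∑ p ∈ D α, s 0 p.1 a * Ob p.2 b c) - Ob α (a * b) c + Ob α a (b * c)
        - ∑ p ∈ D α, Ob p.1 a b * s 0 p.2 c = 0 := by
  intro α a b c
  have key := key_nat m (fun i j => ∑ p ∈ D α, ∑ q ∈ D p.2,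
      s i p.1 a * (s j q.1 b * s (m + 1 - i - j) q.2 c))
  -- A1
  have hA1 : (∑ p ∈ D α, s 0 p.1 a *
        ∑ i ∈ Icc 1 m, ∑ q ∈ D p.2, s i q.1 b * s (m + 1 - i) q.2 c)
      = ∑ i ∈ Icc 1 m, ∑ p ∈ D α, ∑ q ∈ D p.2,
          s 0 p.1 a * (s i q.1 b * s (m + 1 - 0 - i) q.2 c) := by
    simp only [Finset.mul_sum, Nat.sub_zero]
    rw [Finset.sum_comm]
  -- A2
  have hA2 : (∑ i ∈ Icc 1 m, ∑ p ∈ D α, s i p.1 (a * b) * s (m + 1 - i) p.2 c)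
      = ∑ i ∈ Icc 1 m, ∑ j ∈ range (i + 1), ∑ p ∈ D α, ∑ q ∈ D p.2,
          s j p.1 a * (s (i - j) q.1 b * s (m + 1 - j - (i - j)) q.2 c) := by
    refine Finset.sum_congr rfl fun i hi => ?_
    rw [mem_Icc] at hi
    calc ∑ p ∈ D α, s i p.1 (a * b) * s (m + 1 - i) p.2 c
        = ∑ p ∈ D α, (∑ j ∈ range (i + 1), ∑ q ∈ D p.1,
            s j q.1 a * s (i - j) q.2 b) * s (m + 1 - i) p.2 c := by
          refine Finset.sum_congr rfl fun p hp => ?_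
          rw [hcartan i hi.2 p.1 a b]
      _ = ∑ j ∈ range (i + 1), ∑ p ∈ D α, ∑ q ∈ D p.1,
            (s j q.1 a * s (i - j) q.2 b) * s (m + 1 - i) p.2 c := by
          simp only [Finset.sum_mul]
          rw [Finset.sum_comm]
      _ = ∑ j ∈ range (i + 1), ∑ p ∈ D α, ∑ q ∈ D p.2,
            (s j p.1 a * s (i - j) q.1 b) * s (m + 1 - i) q.2 c := by
          refine Finset.sum_congr rfl fun j hj => ?_
          exact assoc_sum D hD α (fun x y z => (s j x a * s (i - j) y b) * s (m + 1 - i) z c)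
      _ = ∑ j ∈ range (i + 1), ∑ p ∈ D α, ∑ q ∈ D p.2,
            s j p.1 a * (s (i - j) q.1 b * s (m + 1 - j - (i - j)) q.2 c) := by
          refine Finset.sum_congr rfl fun j hj => ?_
          rw [mem_range] at hj
          have : m + 1 - j - (i - j) = m + 1 - i := by omega
          rw [this]
          simp only [mul_assoc]
  -- A3
  have hA3 : (∑ i ∈ Icc 1 m, ∑ p ∈ D α, s i p.1 a * s (m + 1 - i) p.2 (b * c))
      = ∑ i ∈ Icc 1 m, ∑ j ∈ range (m + 2 - i), ∑ p ∈ D α, ∑ q ∈ D p.2,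
          s i p.1 a * (s j q.1 b * s (m + 1 - i - j) q.2 c) := by
    refine Finset.sum_congr rfl fun i hi => ?_
    rw [mem_Icc] at hi
    calc ∑ p ∈ D α, s i p.1 a * s (m + 1 - i) p.2 (b * c)
        = ∑ p ∈ D α, s i p.1 a * ∑ j ∈ range (m + 1 - i + 1), ∑ q ∈ D p.2,
            s j q.1 b * s (m + 1 - i - j) q.2 c := by
          refine Finset.sum_congr rfl fun p hp => ?_
          rw [hcartan (m + 1 - i) (by omega) p.2 b c]
      _ = ∑ j ∈ range (m + 2 - i), ∑ p ∈ D α, ∑ q ∈ D p.2,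
            s i p.1 a * (s j q.1 b * s (m + 1 - i - j) q.2 c) := by
          have : m + 1 - i + 1 = m + 2 - i := by omega
          simp only [Finset.mul_sum, this]
          rw [Finset.sum_comm]
  -- A4
  have hA4 : (∑ p ∈ D α, (∑ i ∈ Icc 1 m, ∑ q ∈ D p.1,
        s i q.1 a * s (m + 1 - i) q.2 b) * s 0 p.2 c)
      = ∑ i ∈ Icc 1 m, ∑ p ∈ D α, ∑ q ∈ D p.2,
          s i p.1 a * (s (m + 1 - i) q.1 b * s (m + 1 - i - (m + 1 - i)) q.2 c) := by
    calc ∑ p ∈ D α, (∑ i ∈ Icc 1 m, ∑ q ∈ D p.1,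
            s i q.1 a * s (m + 1 - i) q.2 b) * s 0 p.2 c
        = ∑ i ∈ Icc 1 m, ∑ p ∈ D α, ∑ q ∈ D p.1,
            (s i q.1 a * s (m + 1 - i) q.2 b) * s 0 p.2 c := by
          simp only [Finset.sum_mul]
          rw [Finset.sum_comm]
      _ = ∑ i ∈ Icc 1 m, ∑ p ∈ D α, ∑ q ∈ D p.2,
            (s i p.1 a * s (m + 1 - i) q.1 b) * s 0 q.2 c := by
          refine Finset.sum_congr rfl fun i hi => ?_
          exact assoc_sum D hD α (fun x y z => (s i x a * s (m + 1 - i) y b) * s 0 z c)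
      _ = ∑ i ∈ Icc 1 m, ∑ p ∈ D α, ∑ q ∈ D p.2,
            s i p.1 a * (s (m + 1 - i) q.1 b * s (m + 1 - i - (m + 1 - i)) q.2 c) := by
          simp only [Nat.sub_self, mul_assoc]
  simp only [hOb, mul_neg, neg_mul, Finset.sum_neg_distrib, sub_neg_eq_add, neg_neg]
  linear_combination hA2 + hA4 - hA1 - hA3 + key
end

section
/- Let A be a commutative ring, E a set with integer structure constants n(α,β,γ) satisfying associativity (Σ_δ n(α,β,δ)n(δ,γ,ε) = Σ_δ n(β,γ,δ)n(α,δ,ε)), and s : E → End(A) satisfying the product formula. Let s¹,…,s^m (with s⁰ = s) satisfy the product formula up to order m: Σ_{i=0}^n s^i_α ∘ s^{n−i}_β = Σ_γ n(α,β,γ) s^n_γ for all 0 ≤ n ≤ m. Define Ob₀(α,β) = − Σ_{i=1}^m s^i_α ∘ s^{m+1−i}_β. Then Ob₀ is a 2-cocycle for d²₀: s_α ∘ Ob₀(β,γ) − Σ_δ n(α,β,δ) Ob₀(δ,γ) + Σ_δ n(β,γ,δ) Ob₀(α,δ) − Ob₀(α,β) ∘ s_γ = 0 for all α,β,γ ∈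 E. -/
private lemma aux_comp_sum {A : Type*} [AddCommGroup A] {ι : Type*} (t : Finset ι)
    (φ : A →+ A) (F : ι → A →+ A) :
    φ.comp (∑ i ∈ t, F i) = ∑ i ∈ t, φ.comp (F i) := by
  ext x; simp

private lemma aux_sum_comp {A : Type*} [AddCommGroup A] {ι : Type*} (t : Finset ι)
    (φ : A →+ A) (F : ι → A →+ A) :
    (∑ i ∈ t, F i).comp φ = ∑ i ∈ t, (F i).comp φ := by
  ext x; simp

private lemma aux_zsmul_comp {A : Type*} [AddCommGroup A] (c : ℤ) (φ ψ : A →+ A) :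
    (c • ψ).comp φ = c • ψ.comp φ := by
  ext x; simp

private lemma aux_comp_zsmul {A : Type*} [AddCommGroup A] (c : ℤ) (φ ψ : A →+ A) :
    φ.comp (c • ψ) = c • φ.comp ψ := by
  ext x; simp only [AddMonoidHom.comp_apply, AddMonoidHom.smul_apply, map_zsmul]

private lemma aux_comp_neg {A : Type*} [AddCommGroup A] (φ ψ : A →+ A) :
    φ.comp (-ψ) = -φ.comp ψ := by
  ext x; simp

private lemma aux_neg_comp {A : Type*} [AddCommGroup A] (φ ψ : A →+ A) :
    (-ψ).comp φ = -ψ.comp φ := by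
  ext x; simp

/-- The composition part `Ob₀` of the obstruction class of an order-`m` formal
deformation is a `d²₀`-cocycle. -/
theorem stmt_12 {A : Type*} [CommRing A] {E : Type*}
    (nn : E → E → (E →₀ ℤ))
    (hassoc : ∀ α β γ ε : E,
      ((nn α β).sum fun δ c => c * nn δ γ ε) = ((nn β γ).sum fun δ c => c * nn α δ ε))
    (m : ℕ) (hm : 1 ≤ m) (s : ℕ → E → A →+ A)
    (hprod : ∀ n, n ≤ m → ∀ α β : E,
      (∑ i ∈ Finset.range (n + 1), (s i α).comp (s (n - i) β)) =
        (nn α β).sum fun γ c => c • s n γ)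
    (Ob : E → E → A →+ A)
    (hOb : ∀ α β : E, Ob α β = -∑ i ∈ Finset.Icc 1 m, (s i α).comp (s (m + 1 - i) β)) :
    ∀ α β γ : E,
      (s 0 α).comp (Ob β γ) - ((nn α β).sum fun δ c => c • Ob δ γ)
        + ((nn β γ).sum fun δ c => c • Ob α δ) - (Ob α β).comp (s 0 γ) = 0 := by
  classical
  intro α β γ
  set f : ℕ → ℕ → ℕ → (A →+ A) :=
    fun a b c => (s a α).comp ((s b β).comp (s c γ)) with hf
  have T1 : (s 0 α).comp (Ob β γ) = -∑ i ∈ Finset.Icc 1 m, f 0 i (m + 1 - i) := by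
    rw [hOb, aux_comp_neg, aux_comp_sum]
  have T4 : (Ob α β).comp (s 0 γ) = -∑ i ∈ Finset.Icc 1 m, f i (m + 1 - i) 0 := by
    rw [hOb, aux_neg_comp, aux_sum_comp, neg_inj]
    exact Finset.sum_congr rfl fun i _ => AddMonoidHom.comp_assoc _ _ _
  have T2 : ((nn α β).sum fun δ c => c • Ob δ γ)
      = -∑ i ∈ Finset.Icc 1 m, ∑ j ∈ Finset.range (i + 1), f j (i - j) (m + 1 - i) := by
    simp only [Finsupp.sum, hOb, smul_neg, Finset.smul_sum, Finset.sum_neg_distrib]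
    rw [Finset.sum_comm]
    congr 1
    refine Finset.sum_congr rfl fun i hi => ?_
    have hi' : i ≤ m := (Finset.mem_Icc.mp hi).2
    have h1 := hprod i hi' α β
    simp only [Finsupp.sum] at h1
    calc (∑ δ ∈ (nn α β).support, (nn α β) δ • (s i δ).comp (s (m + 1 - i) γ))
        = (∑ δ ∈ (nn α β).support, (nn α β) δ • s i δ).comp (s (m + 1 - i) γ) := by
          rw [aux_sum_comp]
          exact Finset.sum_congr rfl fun δ _ => (aux_zsmul_comp _ _ _).symm
      _ = (∑ j ∈ Finset.range (i + 1), (s j α).comp (s (i - j) β)).comp (s (m + 1 - i) γ) := by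
          rw [h1]
      _ = ∑ j ∈ Finset.range (i + 1), f j (i - j) (m + 1 - i) := by
          rw [aux_sum_comp]
          exact Finset.sum_congr rfl fun j _ => AddMonoidHom.comp_assoc _ _ _
  have T3 : ((nn β γ).sum fun δ c => c • Ob α δ)
      = -∑ i ∈ Finset.Icc 1 m, ∑ j ∈ Finset.range (m + 1 - i + 1), f i j (m + 1 - i - j) := by
    simp only [Finsupp.sum, hOb, smul_neg, Finset.smul_sum, Finset.sum_neg_distrib]
    rw [Finset.sum_comm]
    congr 1
    refine Finset.sum_congr rfl fun i hi => ?_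
    have hi' : 1 ≤ i ∧ i ≤ m := Finset.mem_Icc.mp hi
    have hle : m + 1 - i ≤ m := by omega
    have h1 := hprod (m + 1 - i) hle β γ
    simp only [Finsupp.sum] at h1
    calc (∑ δ ∈ (nn β γ).support, (nn β γ) δ • (s i α).comp (s (m + 1 - i) δ))
        = (s i α).comp (∑ δ ∈ (nn β γ).support, (nn β γ) δ • s (m + 1 - i) δ) := by
          rw [aux_comp_sum]
          exact Finset.sum_congr rfl fun δ _ => (aux_comp_zsmul _ _ _).symm
      _ = (s i α).comp
            (∑ j ∈ Finset.range (m + 1 - i + 1), (s j β).comp (s (m + 1 - i - j) γ)) := by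
          rw [h1]
      _ = ∑ j ∈ Finset.range (m + 1 - i + 1), f i j (m + 1 - i - j) := by
          rw [aux_comp_sum]
  rw [T1, T2, T3, T4]
  have hB : ∑ i ∈ Finset.Icc 1 m, ∑ j ∈ Finset.range (i + 1), f j (i - j) (m + 1 - i)
      = (∑ i ∈ Finset.Icc 1 m, f 0 i (m + 1 - i))
        + ∑ i ∈ Finset.Icc 1 m, ∑ j ∈ Finset.range i, f (j + 1) (i - (j + 1)) (m + 1 - i) := by
    rw [← Finset.sum_add_distrib]
    refine Finset.sum_congr rfl fun i hi => ?_
    rw [Finset.sum_range_succ']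
    simp [add_comm]
  have hC : ∑ i ∈ Finset.Icc 1 m, ∑ j ∈ Finset.range (m + 1 - i + 1), f i j (m + 1 - i - j)
      = (∑ i ∈ Finset.Icc 1 m, ∑ j ∈ Finset.range (m + 1 - i), f i j (m + 1 - i - j))
        + ∑ i ∈ Finset.Icc 1 m, f i (m + 1 - i) 0 := by
    rw [← Finset.sum_add_distrib]
    refine Finset.sum_congr rfl fun i hi => ?_
    rw [Finset.sum_range_succ, Nat.sub_self]
  rw [hB, hC]
  have key : ∑ i ∈ Finset.Icc 1 m, ∑ j ∈ Finset.range i, f (j + 1) (i - (j + 1)) (m + 1 - i)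
      = ∑ i ∈ Finset.Icc 1 m, ∑ j ∈ Finset.range (m + 1 - i), f i j (m + 1 - i - j) := by
    rw [Finset.sum_sigma', Finset.sum_sigma']
    refine Finset.sum_nbij' (fun p => ⟨p.2 + 1, p.1 - p.2 - 1⟩)
      (fun q => ⟨q.1 + q.2, q.1 - 1⟩) ?_ ?_ ?_ ?_ ?_
    · rintro ⟨i, j⟩ hp
      simp only [Finset.mem_sigma, Finset.mem_Icc, Finset.mem_range] at hp ⊢
      omega
    · rintro ⟨a, b⟩ hq
      simp only [Finset.mem_sigma, Finset.mem_Icc, Finset.mem_range] at hq ⊢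
      omega
    · rintro ⟨i, j⟩ hp
      simp only [Finset.mem_sigma, Finset.mem_Icc, Finset.mem_range] at hp
      have h1 : j + 1 + (i - j - 1) = i := by omega
      have h2 : j + 1 - 1 = j := by omega
      simp only [h1, h2]
    · rintro ⟨a, b⟩ hq
      simp only [Finset.mem_sigma, Finset.mem_Icc, Finset.mem_range] at hq
      have h1 : a - 1 + 1 = a := by omega
      have h2 : a + b - (a - 1) - 1 = b := by omega
      simp only [h1, h2]
    · rintro ⟨i, j⟩ hp
      simp only [Finset.mem_sigma, Finset.mem_Icc, Finset.mem_range] at hp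
      have e1 : i - (j + 1) = i - j - 1 := by omega
      have e2 : m + 1 - i = m + 1 - (j + 1) - (i - j - 1) := by omega
      rw [e1, e2]
  rw [key]
  abel
end

section
/- Let A be a commutative ring, E a commutative monoid with finite decompositions, and s : E → End(A) satisfying the Cartan formula. Let s¹,…,s^m satisfy the Cartan formula up to order m (as above). Then there exists s^{m+1} : E → End(A) making s⁰,…,s^{m+1} satisfy the Cartan formula up to order m+1 if and only if the 2-cocycle Ob₁ (defined by (Ob₁)_α(a⊗b) = −Σ_{i=1}^m Σ_{β+γ=α} s^i_β(a) s^{m+1−i}_γ(b)) equals d¹₁ f for some f : E → End(A), where (d¹₁f)_α(a⊗b) = Σ_{β+γ=α} s_β(a) f_γ(b) − f_α(ab) + Σ_{β+γ=α} f_β(a) s_γ(b). -/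
private lemma sum_split {A : Type*} [AddCommMonoid A] (m : ℕ) (g : ℕ → A) :
    ∑ i ∈ Finset.range (m + 1 + 1), g i =
      g 0 + (∑ i ∈ Finset.Icc 1 m, g i + g (m + 1)) := by
  have h : Finset.range (m + 1) = insert 0 (Finset.Icc 1 m) := by
    ext x; simp; omega
  rw [Finset.sum_range_succ, h, Finset.sum_insert (by simp), add_assoc]

/-- An order-`m` deformation of the Cartan formula extends to order `m + 1` if and only
if the obstruction `Ob₁` is the `d¹₁`-coboundary of some 1-cochain. -/
theorem stmt_13 {A : Type*} [CommRing A] {E : Type*} [AddCommMonoid E]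
    (D : E → Finset (E × E)) (hD : ∀ (α : E) (p : E × E), p ∈ D α ↔ p.1 + p.2 = α)
    (m : ℕ) (hm : 1 ≤ m) (s : ℕ → E → A →+ A)
    (hcartan : ∀ n, n ≤ m → ∀ (α : E) (a b : A),
      s n α (a * b) =
        ∑ i ∈ Finset.range (n + 1), ∑ p ∈ D α, s i p.1 a * s (n - i) p.2 b) :
    (∃ S : ℕ → E → A →+ A, (∀ i, i ≤ m → S i = s i) ∧
      (∀ n, n ≤ m + 1 → ∀ (α : E) (a b : A),
        S n α (a * b) =
          ∑ i ∈ Finset.range (n + 1), ∑ p ∈ D α, S i p.1 a * S (n - i) p.2 b)) ↔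
    (∃ f : E → A →+ A, ∀ (α : E) (a b : A),
      (-∑ i ∈ Finset.Icc 1 m, ∑ p ∈ D α, s i p.1 a * s (m + 1 - i) p.2 b) =
        (∑ p ∈ D α, s 0 p.1 a * f p.2 b) - f α (a * b)
          + ∑ p ∈ D α, f p.1 a * s 0 p.2 b) := by
  constructor
  · rintro ⟨S, hSeq, hS⟩
    refine ⟨S (m + 1), fun α a b => ?_⟩
    have h := hS (m + 1) le_rfl α a b
    rw [sum_split] at h
    have h0 : S 0 = s 0 := hSeq 0 (by omega)
    have hmid : ∑ i ∈ Finset.Icc 1 m, ∑ p ∈ D α, S i p.1 a * S (m + 1 - i) p.2 b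
        = ∑ i ∈ Finset.Icc 1 m, ∑ p ∈ D α, s i p.1 a * s (m + 1 - i) p.2 b := by
      refine Finset.sum_congr rfl fun i hi => ?_
      simp only [Finset.mem_Icc] at hi
      rw [hSeq i (by omega), hSeq (m + 1 - i) (by omega)]
    simp only [Nat.sub_zero, Nat.sub_self, h0, hmid] at h
    linear_combination h
  · rintro ⟨f, hf⟩
    refine ⟨fun n => if n ≤ m then s n else f, fun i hi => if_pos hi, fun n hn α a b => ?_⟩
    rcases Nat.lt_or_ge n (m + 1) with h | h
    · have hn' : n ≤ m := by omega
      beta_reduce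
      rw [if_pos hn', hcartan n hn' α a b]
      refine Finset.sum_congr rfl fun i hi => Finset.sum_congr rfl fun p _ => ?_
      simp only [Finset.mem_range] at hi
      rw [if_pos (by omega : i ≤ m), if_pos (by omega : n - i ≤ m)]
    · have hn' : n = m + 1 := by omega
      subst hn'
      beta_reduce
      rw [if_neg (by omega), sum_split]
      have h0 : ∀ k, (m + 1 - k = m + 1 - k) := fun _ => rfl
      have e0 : (∑ p ∈ D α, (if (0:ℕ) ≤ m then s 0 else f) p.1 a *
          (if m + 1 - 0 ≤ m then s (m + 1 - 0) else f) p.2 b)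
          = ∑ p ∈ D α, s 0 p.1 a * f p.2 b := by
        refine Finset.sum_congr rfl fun p _ => ?_
        rw [if_pos (by omega), if_neg (by omega)]
      have etop : (∑ p ∈ D α, (if m + 1 ≤ m then s (m + 1) else f) p.1 a *
          (if m + 1 - (m + 1) ≤ m then s (m + 1 - (m + 1)) else f) p.2 b)
          = ∑ p ∈ D α, f p.1 a * s 0 p.2 b := by
        refine Finset.sum_congr rfl fun p _ => ?_
        rw [if_neg (by omega), if_pos (by omega)]
        norm_num
      have emid : (∑ i ∈ Finset.Icc 1 m, ∑ p ∈ D α,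
          (if i ≤ m then s i else f) p.1 a *
          (if m + 1 - i ≤ m then s (m + 1 - i) else f) p.2 b)
          = ∑ i ∈ Finset.Icc 1 m, ∑ p ∈ D α, s i p.1 a * s (m + 1 - i) p.2 b := by
        refine Finset.sum_congr rfl fun i hi => Finset.sum_congr rfl fun p _ => ?_
        simp only [Finset.mem_Icc] at hi
        rw [if_pos (by omega), if_pos (by omega)]
      rw [e0, etop, emid]
      linear_combination hf α a b
end

section
/- Let A be a commutative ring with structure constants n(α,β,γ) on a set E, and s : E → End(A) satisfying the product formula. Suppose s¹,…,s^m satisfy the product formula up to order m. Then there exists s^{m+1} : E → End(A) such that s⁰,…,s^{m+1} satisfy the product formula up to order m+1 (i.e. Σ_{i=0}^{m+1} s^i_α ∘ s^{m+1−i}_β = Σ_γ n(α,β,γ) s^{m+1}_γ for all α,β) if and only if the 2-cochain Ob₀(α,β) = −Σ_{i=1}^m s^i_α ∘ s^{m+1−i}_β equals d¹₀ f for some f : E → End(A), where (d¹₀f)(α,β) = s_α ∘ f(β) − Σ_γ n(α,β,γ) f(γ) + f(α) ∘ s_β. -/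
private lemma aux_rearr {G : Type*} [AddCommGroup G] {a B c D : G}
    (h : -B = a - D + c) : a + B + c = D := by
  have h2 : -B + D = a + c := by rw [h]; abel
  calc a + B + c = B + (a + c) := by abel
    _ = B + (-B + D) := by rw [h2]
    _ = D := by abel

private lemma key_split {A : Type*} [CommRing A] {E : Type*} (m : ℕ)
    (s S : ℕ → E → A →+ A) (hS : ∀ i, i ≤ m → S i = s i) (α β : E) :
    (∑ i ∈ Finset.range (m + 1 + 1), (S i α).comp (S (m + 1 - i) β)) =
      (s 0 α).comp (S (m + 1) β)
        + (∑ i ∈ Finset.Icc 1 m, (s i α).comp (s (m + 1 - i) β))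
        + (S (m + 1) α).comp (s 0 β) := by
  rw [Finset.sum_range_succ, Finset.sum_range_succ']
  simp only [Nat.sub_self, Nat.sub_zero]
  rw [hS 0 (Nat.zero_le _)]
  have h1 : ∑ i ∈ Finset.range m, (S (i + 1) α).comp (S (m + 1 - (i + 1)) β)
      = ∑ i ∈ Finset.Icc 1 m, (s i α).comp (s (m + 1 - i) β) := by
    rw [← Finset.Ico_add_one_right_eq_Icc, Finset.sum_Ico_eq_sum_range]
    apply Finset.sum_congr rfl
    intro i hi
    simp only [Finset.mem_range] at hi
    rw [hS (i + 1) (by omega), hS (m + 1 - (i + 1)) (by omega)]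
    have e1 : 1 + i = i + 1 := by omega
    have e2 : m + 1 - (1 + i) = m + 1 - (i + 1) := by omega
    rw [e1]
  rw [h1]
  abel

/-- An order-`m` deformation of the product formula extends to order `m + 1` if and only
if the obstruction `Ob₀` is the `d¹₀`-coboundary of some 1-cochain. -/
theorem stmt_14 {A : Type*} [CommRing A] {E : Type*}
    (nn : E → E → (E →₀ ℤ)) (m : ℕ) (hm : 1 ≤ m) (s : ℕ → E → A →+ A)
    (hprod : ∀ n, n ≤ m → ∀ α β : E,
      (∑ i ∈ Finset.range (n + 1), (s i α).comp (s (n - i) β)) =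
        (nn α β).sum fun γ c => c • s n γ) :
    (∃ S : ℕ → E → A →+ A, (∀ i, i ≤ m → S i = s i) ∧
      (∀ n, n ≤ m + 1 → ∀ α β : E,
        (∑ i ∈ Finset.range (n + 1), (S i α).comp (S (n - i) β)) =
          (nn α β).sum fun γ c => c • S n γ)) ↔
    (∃ f : E → A →+ A, ∀ α β : E,
      (-∑ i ∈ Finset.Icc 1 m, (s i α).comp (s (m + 1 - i) β)) =
        (s 0 α).comp (f β) - ((nn α β).sum fun γ c => c • f γ)
          + (f α).comp (s 0 β)) := by
  constructor
  · rintro ⟨S, hS, hS2⟩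
    refine ⟨S (m + 1), fun α β => ?_⟩
    have h := hS2 (m + 1) le_rfl α β
    rw [key_split m s S hS α β] at h
    rw [← h]
    abel
  · rintro ⟨f, hf⟩
    refine ⟨fun n => if n ≤ m then s n else f, fun i hi => if_pos hi, ?_⟩
    intro n hn α β
    rcases eq_or_lt_of_le hn with rfl | hlt
    · have hS : ∀ i, i ≤ m → (fun n => if n ≤ m then s n else f) i = s i :=
        fun i hi => if_pos hi
      rw [key_split m s _ hS α β]
      simp only [if_neg (show ¬ m + 1 ≤ m by omega)]
      exact aux_rearr (hf α β)
    · have hn' : n ≤ m := by omega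
      have h1 : ∀ i ∈ Finset.range (n + 1),
          ((if i ≤ m then s i else f) α).comp ((if n - i ≤ m then s (n - i) else f) β)
            = (s i α).comp (s (n - i) β) := by
        intro i hi
        simp only [Finset.mem_range] at hi
        rw [if_pos (by omega), if_pos (by omega)]
      simp only []
      rw [Finset.sum_congr rfl h1, if_pos hn']
      exact hprod n hn' α β
end

section
/- Let A be a commutative ring, E a commutative monoid with finite decompositions, and s : E → End(A). Suppose φ : A → A is a derivation and define f : E → End(A) by f = d⁰φ, i.e. f_α = s_α ∘ φ − φ ∘ s_α. If s satisfies the Cartan formula s_α(ab) = Σ_{β+γ=α} s_β(a)s_γ(b), then f satisfies the d¹₁-cocycle condition: for all α, a, b, Σ_{β+γ=α}( s_β(a) f_γ(b) + f_β(a) s_γ(b) ) = f_α(ab). -/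
/-- For a derivation `φ`, the coboundary `f = d⁰φ`, `f_α = s_α ∘ φ − φ ∘ s_α`, is a
`d¹₁`-cocycle, given the Cartan formula for `s`. -/
theorem stmt_15 {A : Type*} [CommRing A] {E : Type*} [AddCommMonoid E]
    (D : E → Finset (E × E)) (hD : ∀ (α : E) (p : E × E), p ∈ D α ↔ p.1 + p.2 = α)
    (s : E → A →+ A)
    (hcartan : ∀ (α : E) (a b : A), s α (a * b) = ∑ p ∈ D α, s p.1 a * s p.2 b)
    (φ : A →+ A) (hder : ∀ a b : A, φ (a * b) = a * φ b + φ a * b)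
    (f : E → A →+ A) (hf : ∀ α : E, f α = (s α).comp φ - φ.comp (s α)) :
    ∀ (α : E) (a b : A),
      (∑ p ∈ D α, (s p.1 a * f p.2 b + f p.1 a * s p.2 b)) = f α (a * b) := by
  intro α a b
  simp only [hf, AddMonoidHom.sub_apply, AddMonoidHom.comp_apply]
  rw [hder a b, map_add, hcartan, hcartan, hcartan, map_sum]
  simp only [hder]
  rw [← Finset.sum_add_distrib, ← Finset.sum_sub_distrib]
  exact Finset.sum_congr rfl fun p _ => by ring
end

section
/- Let A be a commutative ring and let Φ_t = Σ_{n≥0} t^n φ_n and Ψ_t = Σ_{n≥0} t^n ψ_n be composition-inverse power series in End(A)[[t]] with φ₀ = ψ₀ = id_A (i.e. the degreewise compositions satisfy Σ_{i=0}^n φ_i ∘ ψ_{n−i} = 0 = Σ_{i=0}^n ψ_i ∘ φ_{n−i} for all n ≥ 1). If Φ_t is multiplicative (φ_n(ab) = Σ_{i=0}^n φ_i(a)φ_{n−i}(b) for all n, a, b), then Ψ_t is multiplicative as well. -/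
/-- If `Φ_t` and `Ψ_t` are composition-inverse power series of additive endomorphisms
with constant term the identity and `Φ_t` is multiplicative, then so is `Ψ_t`. -/
theorem stmt_17 {A : Type*} [CommRing A] (φ ψ : ℕ → A →+ A)
    (hφ0 : φ 0 = AddMonoidHom.id A) (hψ0 : ψ 0 = AddMonoidHom.id A)
    (hinv₁ : ∀ n, 1 ≤ n → (∑ i ∈ Finset.range (n + 1), (φ i).comp (ψ (n - i))) = 0)
    (hinv₂ : ∀ n, 1 ≤ n → (∑ i ∈ Finset.range (n + 1), (ψ i).comp (φ (n - i))) = 0)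
    (hmul : ∀ (n : ℕ) (a b : A),
      φ n (a * b) = ∑ i ∈ Finset.range (n + 1), φ i a * φ (n - i) b) :
    ∀ (n : ℕ) (a b : A),
      ψ n (a * b) = ∑ i ∈ Finset.range (n + 1), ψ i a * ψ (n - i) b := by
  -- The degreewise composition Φ ∘ Ψ is the identity in degree 0 and zero in higher degrees.
  have hD : ∀ (m : ℕ) (c : A),
      (∑ k ∈ Finset.range (m + 1), φ k (ψ (m - k) c)) = if m = 0 then c else 0 := by
    intro m c
    rcases Nat.eq_zero_or_pos m with h | h
    · subst h; simp [hφ0, hψ0]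
    · have h1 := hinv₁ m h
      have h2 := DFunLike.congr_fun h1 c
      simp only [AddMonoidHom.finset_sum_apply, AddMonoidHom.coe_comp, Function.comp_apply,
        AddMonoidHom.zero_apply] at h2
      rw [h2, if_neg (by omega)]
  intro n
  induction n using Nat.strong_induction_on with
  | _ n ih =>
    intro a b
    rcases Nat.eq_zero_or_pos n with h | h
    · subst h; simp [hψ0]
    -- key sum with differences; all terms except k = 0 vanish by induction
    have key : (∑ k ∈ Finset.range (n + 1),
        φ k (ψ (n - k) (a * b) - ∑ i ∈ Finset.range (n - k + 1), ψ i a * ψ (n - k - i) b))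
        = ψ n (a * b) - ∑ i ∈ Finset.range (n + 1), ψ i a * ψ (n - i) b := by
      rw [Finset.sum_eq_single_of_mem 0 (by simp)]
      · simp [hφ0]
      · intro k hk hk0
        have hkn : k ≤ n := by simpa using Nat.lt_succ_iff.mp (Finset.mem_range.mp hk)
        have : ψ (n - k) (a * b) = ∑ i ∈ Finset.range (n - k + 1), ψ i a * ψ (n - k - i) b :=
          ih (n - k) (by omega) a b
        rw [this, sub_self, map_zero]
    -- expand the key sum as a difference
    have expand : (∑ k ∈ Finset.range (n + 1),
        φ k (ψ (n - k) (a * b) - ∑ i ∈ Finset.range (n - k + 1), ψ i a * ψ (n - k - i) b))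
        = (∑ k ∈ Finset.range (n + 1), φ k (ψ (n - k) (a * b)))
          - ∑ k ∈ Finset.range (n + 1),
              φ k (∑ i ∈ Finset.range (n - k + 1), ψ i a * ψ (n - k - i) b) := by
      rw [← Finset.sum_sub_distrib]
      exact Finset.sum_congr rfl fun k _ => map_sub _ _ _
    have hfirst : (∑ k ∈ Finset.range (n + 1), φ k (ψ (n - k) (a * b))) = 0 := by
      rw [hD n (a * b), if_neg (by omega)]
    -- the triple-sum rearrangement
    have T : (∑ k ∈ Finset.range (n + 1),
        φ k (∑ i ∈ Finset.range (n - k + 1), ψ i a * ψ (n - k - i) b)) = 0 := by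
      have step1 : (∑ k ∈ Finset.range (n + 1),
          φ k (∑ i ∈ Finset.range (n - k + 1), ψ i a * ψ (n - k - i) b))
          = ∑ k ∈ Finset.range (n + 1), ∑ m ∈ Finset.range (n - k + 1),
              ∑ p ∈ Finset.range (k + 1), φ p (ψ m a) * φ (k - p) (ψ (n - k - m) b) := by
        refine Finset.sum_congr rfl fun k _ => ?_
        rw [map_sum]
        exact Finset.sum_congr rfl fun m _ => hmul k _ _
      have step2 : (∑ s ∈ Finset.range (n + 1),
          (∑ p ∈ Finset.range (s + 1), φ p (ψ (s - p) a)) *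
            (∑ q ∈ Finset.range (n - s + 1), φ q (ψ (n - s - q) b)))
          = ∑ s ∈ Finset.range (n + 1), ∑ p ∈ Finset.range (s + 1),
              ∑ q ∈ Finset.range (n - s + 1), φ p (ψ (s - p) a) * φ q (ψ (n - s - q) b) := by
        refine Finset.sum_congr rfl fun s _ => ?_
        rw [Finset.sum_mul_sum]
      have reindex : (∑ k ∈ Finset.range (n + 1), ∑ m ∈ Finset.range (n - k + 1),
              ∑ p ∈ Finset.range (k + 1), φ p (ψ m a) * φ (k - p) (ψ (n - k - m) b))
          = ∑ s ∈ Finset.range (n + 1), ∑ p ∈ Finset.range (s + 1),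
              ∑ q ∈ Finset.range (n - s + 1), φ p (ψ (s - p) a) * φ q (ψ (n - s - q) b) := by
        rw [Finset.sum_sigma', Finset.sum_sigma', Finset.sum_sigma', Finset.sum_sigma']
        refine Finset.sum_nbij' (fun x => ⟨⟨x.2 + x.1.2, x.2⟩, x.1.1 - x.2⟩)
          (fun y => ⟨⟨y.1.2 + y.2, y.1.1 - y.1.2⟩, y.1.2⟩) ?_ ?_ ?_ ?_ ?_
        · rintro ⟨⟨k, m⟩, p⟩ hx
          simp only [Finset.mem_sigma, Finset.mem_range] at hx ⊢
          omega
        · rintro ⟨⟨s, p⟩, q⟩ hy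
          simp only [Finset.mem_sigma, Finset.mem_range] at hy ⊢
          omega
        · rintro ⟨⟨k, m⟩, p⟩ hx
          simp only [Finset.mem_sigma, Finset.mem_range] at hx
          simp only [Sigma.mk.inj_iff, heq_eq_eq, and_true, true_and]
          omega
        · rintro ⟨⟨s, p⟩, q⟩ hy
          simp only [Finset.mem_sigma, Finset.mem_range] at hy
          simp only [Sigma.mk.inj_iff, heq_eq_eq, and_true, true_and]
          omega
        · rintro ⟨⟨k, m⟩, p⟩ hx
          simp only [Finset.mem_sigma, Finset.mem_range] at hx
          have h1 : p + m - p = m := by omega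
          have h2 : n - (p + m) - (k - p) = n - k - m := by omega
          dsimp only
          rw [h1, h2]
      rw [step1, reindex, ← step2]
      -- now each factor is given by hD, and the product always vanishes for n ≥ 1
      refine Finset.sum_eq_zero fun s hs => ?_
      rw [hD, hD]
      have hsn : s ≤ n := by simpa using Nat.lt_succ_iff.mp (Finset.mem_range.mp hs)
      rcases eq_or_ne s 0 with h0 | h0
      · subst h0; rw [if_pos rfl, if_neg (by omega), mul_zero]
      · rw [if_neg h0, zero_mul]
    rw [expand, hfirst, T, sub_zero] at key
    exact sub_eq_zero.mp key.symm
end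

section
/- Let A be a commutative ring, E a commutative monoid with finite decompositions, and σ^t_* = Σ_n t^n s^n_* a formal deformation satisfying the Cartan formula degreewise (s^n_α(ab) = Σ_{i=0}^n Σ_{β+γ=α} s^i_β(a)s^{n−i}_γ(b)). Let Φ_t = Σ_n t^n φ_n be a formal automorphism on A (multiplicative, φ₀ = id) with multiplicative inverse Φ_t^{-1}. Then the conjugate power series Φ_t^{-1} σ^t_* Φ_t (with α-component at degree n given by Σ_{i+j+k=n} ψ_i ∘ s^j_α ∘ φ_k, where ψ_i are the coefficients of Φ_t^{-1}) again satisfies the Cartan formula degreewise. -/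
open Finset PowerSeries

namespace Stmt18Aux

variable {A : Type*} [CommRing A]

noncomputable def extOp (f : ℕ → A →+ A) : A⟦X⟧ →+ A⟦X⟧ :=
  AddMonoidHom.mk'
    (fun a => PowerSeries.mk fun m => ∑ p ∈ antidiagonal m, f p.1 ((coeff p.2) a))
    (by
      intro a b
      ext m
      simp [map_add, Finset.sum_add_distrib])

lemma coeff_extOp (f : ℕ → A →+ A) (a : A⟦X⟧) (m : ℕ) :
    coeff m (extOp f a) = ∑ p ∈ antidiagonal m, f p.1 ((coeff p.2) a) := by
  simp [extOp]

lemma sum4 {M : Type*} [AddCommMonoid M] (m : ℕ) (G : ℕ → ℕ → ℕ → ℕ → M) :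
    (∑ p ∈ antidiagonal m, ∑ q ∈ antidiagonal p.1, ∑ r ∈ antidiagonal p.2,
      G q.1 q.2 r.1 r.2)
    = ∑ p ∈ antidiagonal m, ∑ q ∈ antidiagonal p.1, ∑ r ∈ antidiagonal p.2,
      G q.1 r.1 q.2 r.2 := by
  have h1 : ∀ F : ℕ × ℕ → ℕ × ℕ → ℕ × ℕ → M,
      (∑ p ∈ antidiagonal m, ∑ q ∈ antidiagonal p.1, ∑ r ∈ antidiagonal p.2, F p q r)
      = ∑ x ∈ (antidiagonal m).sigma
          (fun p => antidiagonal p.1 ×ˢ antidiagonal p.2),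
          F x.1 x.2.1 x.2.2 := by
    intro F
    rw [Finset.sum_sigma]
    refine Finset.sum_congr rfl fun p _ => ?_
    rw [Finset.sum_product]
  rw [h1, h1]
  apply Finset.sum_nbij'
    (i := fun x => ⟨(x.2.1.1 + x.2.2.1, x.2.1.2 + x.2.2.2),
      ((x.2.1.1, x.2.2.1), (x.2.1.2, x.2.2.2))⟩)
    (j := fun x => ⟨(x.2.1.1 + x.2.2.1, x.2.1.2 + x.2.2.2),
      ((x.2.1.1, x.2.2.1), (x.2.1.2, x.2.2.2))⟩)
  · intro x hx
    obtain ⟨⟨p1, p2⟩, ⟨⟨a1, a2⟩, ⟨b1, b2⟩⟩⟩ := x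
    simp only [Finset.mem_sigma, Finset.mem_product, Finset.HasAntidiagonal.mem_antidiagonal] at hx ⊢
    obtain ⟨h1', h2', h3'⟩ := hx
    exact ⟨by omega, trivial, trivial⟩
  · intro x hx
    obtain ⟨⟨p1, p2⟩, ⟨⟨a1, a2⟩, ⟨b1, b2⟩⟩⟩ := x
    simp only [Finset.mem_sigma, Finset.mem_product, Finset.HasAntidiagonal.mem_antidiagonal] at hx ⊢
    obtain ⟨h1', h2', h3'⟩ := hx
    exact ⟨by omega, trivial, trivial⟩
  · intro x hx
    obtain ⟨⟨p1, p2⟩, ⟨⟨a1, a2⟩, ⟨b1, b2⟩⟩⟩ := x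
    simp only [Finset.mem_sigma, Finset.mem_product, Finset.HasAntidiagonal.mem_antidiagonal] at hx
    obtain ⟨h0, h1', h2'⟩ := hx
    simp only at h1' h2' ⊢
    rw [h1', h2']
  · intro x hx
    obtain ⟨⟨p1, p2⟩, ⟨⟨a1, a2⟩, ⟨b1, b2⟩⟩⟩ := x
    simp only [Finset.mem_sigma, Finset.mem_product, Finset.HasAntidiagonal.mem_antidiagonal] at hx
    obtain ⟨h0, h1', h2'⟩ := hx
    simp only at h1' h2' ⊢
    rw [h1', h2']
  · intro x hx
    rfl

lemma extOp_mul (f : ℕ → A →+ A)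
    (hf : ∀ (n : ℕ) (a b : A),
      f n (a * b) = ∑ i ∈ Finset.range (n + 1), f i a * f (n - i) b)
    (a b : A⟦X⟧) : extOp f (a * b) = extOp f a * extOp f b := by
  have hf' : ∀ (n : ℕ) (x y : A),
      f n (x * y) = ∑ q ∈ antidiagonal n, f q.1 x * f q.2 y := by
    intro n x y
    rw [Finset.Nat.sum_antidiagonal_eq_sum_range_succ (fun i j => f i x * f j y)]
    exact hf n x y
  ext m
  rw [coeff_extOp, PowerSeries.coeff_mul]
  calc (∑ p ∈ antidiagonal m, f p.1 ((coeff p.2) (a * b)))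
      = ∑ p ∈ antidiagonal m, ∑ q ∈ antidiagonal p.2, ∑ r ∈ antidiagonal p.1,
          f r.1 ((coeff q.1) a) * f r.2 ((coeff q.2) b) := by
        refine Finset.sum_congr rfl fun p _ => ?_
        rw [PowerSeries.coeff_mul, map_sum]
        exact Finset.sum_congr rfl fun q _ => hf' p.1 _ _
    _ = ∑ p ∈ antidiagonal m, ∑ q ∈ antidiagonal p.1, ∑ r ∈ antidiagonal p.2,
          f q.1 ((coeff r.1) a) * f q.2 ((coeff r.2) b) := by
        exact Finset.sum_congr rfl fun p _ => Finset.sum_comm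
    _ = ∑ p ∈ antidiagonal m, ∑ q ∈ antidiagonal p.1, ∑ r ∈ antidiagonal p.2,
          f q.1 ((coeff q.2) a) * f r.1 ((coeff r.2) b) :=
        sum4 m (fun i j k l => f i ((coeff k) a) * f j ((coeff l) b))
    _ = ∑ p ∈ antidiagonal m, (coeff p.1) (extOp f a) * (coeff p.2) (extOp f b) := by
        refine Finset.sum_congr rfl fun p _ => ?_
        rw [coeff_extOp, coeff_extOp, Finset.sum_mul_sum]

lemma extOp_cartan {I : Type*} (W : Finset I) (t : ℕ → A →+ A) (u v : I → ℕ → A →+ A)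
    (hc : ∀ (n : ℕ) (x y : A),
      t n (x * y) = ∑ r ∈ antidiagonal n, ∑ w ∈ W, u w r.1 x * v w r.2 y)
    (a b : A⟦X⟧) :
    extOp t (a * b) = ∑ w ∈ W, extOp (u w) a * extOp (v w) b := by
  ext m
  rw [coeff_extOp, map_sum]
  calc (∑ p ∈ antidiagonal m, t p.1 ((coeff p.2) (a * b)))
      = ∑ p ∈ antidiagonal m, ∑ q ∈ antidiagonal p.2, ∑ r ∈ antidiagonal p.1,
          ∑ w ∈ W, u w r.1 ((coeff q.1) a) * v w r.2 ((coeff q.2) b) := by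
        refine Finset.sum_congr rfl fun p _ => ?_
        rw [PowerSeries.coeff_mul, map_sum]
        exact Finset.sum_congr rfl fun q _ => hc p.1 _ _
    _ = ∑ p ∈ antidiagonal m, ∑ q ∈ antidiagonal p.1, ∑ r ∈ antidiagonal p.2,
          ∑ w ∈ W, u w q.1 ((coeff r.1) a) * v w q.2 ((coeff r.2) b) :=
        Finset.sum_congr rfl fun p _ => Finset.sum_comm
    _ = ∑ p ∈ antidiagonal m, ∑ q ∈ antidiagonal p.1, ∑ r ∈ antidiagonal p.2,
          ∑ w ∈ W, u w q.1 ((coeff q.2) a) * v w r.1 ((coeff r.2) b) :=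
        sum4 m (fun i j k l => ∑ w ∈ W, u w i ((coeff k) a) * v w j ((coeff l) b))
    _ = ∑ p ∈ antidiagonal m, ∑ q ∈ antidiagonal p.1, ∑ w ∈ W, ∑ r ∈ antidiagonal p.2,
          u w q.1 ((coeff q.2) a) * v w r.1 ((coeff r.2) b) :=
        Finset.sum_congr rfl fun p _ => Finset.sum_congr rfl fun q _ => Finset.sum_comm
    _ = ∑ p ∈ antidiagonal m, ∑ w ∈ W, ∑ q ∈ antidiagonal p.1, ∑ r ∈ antidiagonal p.2,
          u w q.1 ((coeff q.2) a) * v w r.1 ((coeff r.2) b) :=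
        Finset.sum_congr rfl fun p _ => Finset.sum_comm
    _ = ∑ w ∈ W, ∑ p ∈ antidiagonal m, ∑ q ∈ antidiagonal p.1, ∑ r ∈ antidiagonal p.2,
          u w q.1 ((coeff q.2) a) * v w r.1 ((coeff r.2) b) :=
        Finset.sum_comm
    _ = ∑ w ∈ W, (coeff m) (extOp (u w) a * extOp (v w) b) := by
        refine Finset.sum_congr rfl fun w _ => ?_
        rw [PowerSeries.coeff_mul]
        refine Finset.sum_congr rfl fun p _ => ?_
        rw [coeff_extOp, coeff_extOp, Finset.sum_mul_sum]

lemma extOp_C (f : ℕ → A →+ A) (a : A) :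
    extOp f (C a) = PowerSeries.mk fun n => f n a := by
  ext m
  rw [coeff_extOp, coeff_mk, Finset.sum_eq_single (m, 0)]
  · simp
  · intro p hp hne
    rw [Finset.HasAntidiagonal.mem_antidiagonal] at hp
    have h2 : p.2 ≠ 0 := by
      intro h
      apply hne
      obtain ⟨p1, p2⟩ := p
      simp only at h hp
      subst h
      simp only [Nat.add_zero] at hp
      rw [hp]
    rw [PowerSeries.coeff_C, if_neg h2, map_zero]
  · intro h
    exact absurd (Finset.HasAntidiagonal.mem_antidiagonal.mpr (by simp)) h

lemma tau_formula (s φ ψ : ℕ → A →+ A) (n : ℕ) (a : A) :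
    (∑ i ∈ Finset.range (n + 1), ∑ j ∈ Finset.range (n + 1 - i),
      (ψ i).comp ((s j).comp (φ (n - i - j)))) a
      = coeff n (extOp ψ (extOp s (extOp φ (C a)))) := by
  rw [extOp_C, coeff_extOp]
  simp only [coeff_extOp, coeff_mk, map_sum]
  rw [Finset.Nat.sum_antidiagonal_eq_sum_range_succ
    (fun i k => ∑ q ∈ antidiagonal k, ψ i (s q.1 (φ q.2 a)))]
  simp only [AddMonoidHom.finset_sum_apply, AddMonoidHom.coe_comp, Function.comp_apply]
  refine Finset.sum_congr rfl fun i hi => ?_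
  rw [Finset.mem_range] at hi
  rw [Finset.Nat.sum_antidiagonal_eq_sum_range_succ (fun j k => ψ i (s j (φ k a)))]
  have : n + 1 - i = (n - i) + 1 := by omega
  rw [this]

end Stmt18Aux

open Stmt18Aux in
/-- Conjugating a formal deformation of the Cartan formula by a formal automorphism
(with multiplicative inverse) again yields a family satisfying the Cartan formula
degreewise. -/
theorem stmt_18 {A : Type*} [CommRing A] {E : Type*} [AddCommMonoid E]
    (D : E → Finset (E × E)) (hD : ∀ (α : E) (p : E × E), p ∈ D α ↔ p.1 + p.2 = α)
    (s : ℕ → E → A →+ A)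
    (hcartan : ∀ (n : ℕ) (α : E) (a b : A),
      s n α (a * b) =
        ∑ i ∈ Finset.range (n + 1), ∑ p ∈ D α, s i p.1 a * s (n - i) p.2 b)
    (φ ψ : ℕ → A →+ A)
    (hφ0 : φ 0 = AddMonoidHom.id A) (hψ0 : ψ 0 = AddMonoidHom.id A)
    (hinv₁ : ∀ n, 1 ≤ n → (∑ i ∈ Finset.range (n + 1), (φ i).comp (ψ (n - i))) = 0)
    (hinv₂ : ∀ n, 1 ≤ n → (∑ i ∈ Finset.range (n + 1), (ψ i).comp (φ (n - i))) = 0)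
    (hφmul : ∀ (n : ℕ) (a b : A),
      φ n (a * b) = ∑ i ∈ Finset.range (n + 1), φ i a * φ (n - i) b)
    (hψmul : ∀ (n : ℕ) (a b : A),
      ψ n (a * b) = ∑ i ∈ Finset.range (n + 1), ψ i a * ψ (n - i) b)
    (τ : ℕ → E → A →+ A)
    (hτ : ∀ (n : ℕ) (α : E),
      τ n α = ∑ i ∈ Finset.range (n + 1), ∑ j ∈ Finset.range (n + 1 - i),
        (ψ i).comp ((s j α).comp (φ (n - i - j)))) :
    ∀ (n : ℕ) (α : E) (a b : A),
      τ n α (a * b) =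
        ∑ i ∈ Finset.range (n + 1), ∑ p ∈ D α, τ i p.1 a * τ (n - i) p.2 b := by
  intro n α a b
  have htau' : ∀ (β : E) (k : ℕ) (x : A),
      τ k β x = PowerSeries.coeff k
        (extOp ψ (extOp (fun j => s j β) (extOp φ (PowerSeries.C x)))) := by
    intro β k x
    rw [hτ k β]
    exact tau_formula (fun j => s j β) φ ψ k x
  have hc : ∀ (k : ℕ) (x y : A),
      (fun j => s j α) k (x * y) = ∑ r ∈ Finset.HasAntidiagonal.antidiagonal k, ∑ w ∈ D α,
        (fun β j => s j β) w.1 r.1 x * (fun β j => s j β) w.2 r.2 y := by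
    intro k x y
    simp only
    rw [Finset.Nat.sum_antidiagonal_eq_sum_range_succ
      (fun i j => ∑ w ∈ D α, s i w.1 x * s j w.2 y)]
    exact hcartan k α x y
  calc τ n α (a * b)
      = PowerSeries.coeff n
        (extOp ψ (extOp (fun j => s j α) (extOp φ (PowerSeries.C (a * b))))) :=
        htau' α n (a * b)
    _ = PowerSeries.coeff n (∑ w ∈ D α,
          extOp ψ (extOp (fun j => s j w.1) (extOp φ (PowerSeries.C a))) *
          extOp ψ (extOp (fun j => s j w.2) (extOp φ (PowerSeries.C b)))) := by
        rw [map_mul, extOp_mul φ hφmul,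
          extOp_cartan (D α) (fun j => s j α) (fun w j => s j w.1) (fun w j => s j w.2) hc,
          map_sum]
        refine congrArg _ (Finset.sum_congr rfl fun w _ => ?_)
        rw [extOp_mul ψ hψmul]
    _ = ∑ w ∈ D α, ∑ p ∈ Finset.HasAntidiagonal.antidiagonal n, τ p.1 w.1 a * τ p.2 w.2 b := by
        rw [map_sum]
        refine Finset.sum_congr rfl fun w _ => ?_
        rw [PowerSeries.coeff_mul]
        refine Finset.sum_congr rfl fun p _ => ?_
        rw [htau' w.1 p.1 a, htau' w.2 p.2 b]
    _ = ∑ p ∈ Finset.HasAntidiagonal.antidiagonal n, ∑ w ∈ D α, τ p.1 w.1 a * τ p.2 w.2 b :=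
        Finset.sum_comm
    _ = ∑ i ∈ Finset.range (n + 1), ∑ p ∈ D α, τ i p.1 a * τ (n - i) p.2 b := by
        rw [Finset.Nat.sum_antidiagonal_eq_sum_range_succ
          (fun i j => ∑ w ∈ D α, τ i w.1 a * τ j w.2 b)]
end
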